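/- Suppose that e⁺ ≺ e⁻ (strictly) for every e ∈ E, that there is a positive integer q with |sup_r(I)| = q for every ideal I of P*, and that Θ⁺(x) ∪ Θ⁻(x) ≠ ∅ for every x ∈ P*. Then the map sup_r from the ideals of P* to 𝒮 is a bijection, and for any two ideals I, I′ of P*: I ⊆ I′ if and only if sup_r(I) ≤ sup_r(I′). -/

import Mathlib

/-- An ideal (downward closed subset) of the poset `P*` obtained from `P` by removing
its minimum element `⊥` and maximum element `⊤`. -/
def IsIdealStar {P : Type*} [PartialOrder P] [OrderBot P] [OrderTop P] (I : Set P) : Prop :=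
  (∀ x ∈ I, x ≠ ⊥ ∧ x ≠ ⊤) ∧ ∀ u v : P, v ∈ I → u ≤ v → u ≠ ⊥ → u ∈ I

/-- `sup_r(I) := { e ∈ E : e⁺ ∈ I ∪ {⊥} and e⁻ ∉ I ∪ {⊥} }` where `r e = (e⁺, e⁻)`. -/
def supGen {P E : Type*} [PartialOrder P] [OrderBot P] [OrderTop P]
    (r : E → P × P) (I : Set P) : Set E :=
  {e | (r e).1 ∈ I ∪ {(⊥ : P)} ∧ (r e).2 ∉ I ∪ {(⊥ : P)}}

/-- The partial order on `E`: `e ≤ e'` iff `e = e'` or `e⁻ ⪯ e'⁺`. -/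
def elemLE {P E : Type*} [PartialOrder P] (r : E → P × P) (e e' : E) : Prop :=
  e = e' ∨ (r e).2 ≤ (r e').1

/-- `S ≤ T` iff there is a bijection `π : S → T` with `e ≤ π(e)` for all `e ∈ S`. -/
def setLE {P E : Type*} [PartialOrder P] (r : E → P × P) (S T : Set E) : Prop :=
  ∃ π : E → E, Set.BijOn π S T ∧ ∀ e ∈ S, elemLE r e (π e)

section Helpers

variable {P E : Type*} [PartialOrder P] [OrderBot P] [OrderTop P]

lemma elemLE_trans (r : E → P × P) (hr : ∀ e, (r e).1 < (r e).2) {a b c : E}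
    (h1 : elemLE r a b) (h2 : elemLE r b c) : elemLE r a c := by
  rcases h1 with rfl | h1
  · exact h2
  rcases h2 with rfl | h2
  · exact Or.inr h1
  · exact Or.inr (h1.trans ((hr b).le.trans h2))

lemma setLE_trans (r : E → P × P) (hr : ∀ e, (r e).1 < (r e).2) {S T U : Set E}
    (h1 : setLE r S T) (h2 : setLE r T U) : setLE r S U := by
  obtain ⟨π, hπ, hle⟩ := h1
  obtain ⟨π', hπ', hle'⟩ := h2
  exact ⟨π' ∘ π, hπ'.comp hπ,
    fun e he => elemLE_trans r hr (hle e he) (hle' (π e) (hπ.1 he))⟩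

lemma exists_bijOn_of_ncard_eq {E : Type*} [Fintype E] {s t : Set E}
    (h : s.ncard = t.ncard) : ∃ f : E → E, Set.BijOn f s t := by
  classical
  have hc : Fintype.card s = Fintype.card t := by
    rw [← Nat.card_eq_fintype_card, ← Nat.card_eq_fintype_card,
      Nat.card_coe_set_eq, Nat.card_coe_set_eq, h]
  let e : s ≃ t := Fintype.equivOfCardEq hc
  refine ⟨fun a => if ha : a ∈ s then (e ⟨a, ha⟩ : E) else a, ?_, ?_, ?_⟩
  · intro a ha
    simp only [dif_pos ha]
    exact (e ⟨a, ha⟩).2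
  · intro a ha b hb hab
    simp only [dif_pos ha, dif_pos hb] at hab
    have := e.injective (Subtype.coe_injective hab)
    exact congrArg Subtype.val this
  · intro b hb
    refine ⟨(e.symm ⟨b, hb⟩ : E), (e.symm ⟨b, hb⟩).2, ?_⟩
    simp only [dif_pos (e.symm ⟨b, hb⟩).2, Subtype.coe_eta, Equiv.apply_symm_apply]

lemma step_sets (r : E → P × P) (hr : ∀ e, (r e).1 < (r e).2)
    {I : Set P} (hI : IsIdealStar I) {x : P} (hx : x ∉ I)
    (hI1 : IsIdealStar (insert x I)) :
    {e : E | (r e).2 = x} ⊆ supGen r I ∧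
    supGen r I ∩ {e : E | (r e).1 = x} = ∅ ∧
    supGen r (insert x I) = (supGen r I \ {e : E | (r e).2 = x}) ∪ {e : E | (r e).1 = x} := by
  have hxb : x ≠ ⊥ := (hI1.1 x (Set.mem_insert x I)).1
  have hxmem : x ∉ I ∪ {(⊥ : P)} := by
    simp only [Set.mem_union, Set.mem_singleton_iff]
    tauto
  have hB : ∀ e : E, (r e).1 = x → (r e).2 ∉ insert x I ∪ {(⊥ : P)} := by
    intro e he hmem
    have hlt : x < (r e).2 := he ▸ hr e
    simp only [Set.mem_union, Set.mem_insert_iff, Set.mem_singleton_iff] at hmem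
    rcases hmem with (hm | hm) | hm
    · exact absurd (hm ▸ hlt) (lt_irrefl x)
    · exact hx (hI.2 x (r e).2 hm hlt.le hxb)
    · exact absurd (hm ▸ hlt) not_lt_bot
  have hA : ∀ e : E, (r e).2 = x → (r e).1 ∈ I ∪ {(⊥ : P)} := by
    intro e he
    have hlt : (r e).1 < x := he ▸ hr e
    by_cases hb : (r e).1 = ⊥
    · exact Set.mem_union_right _ (Set.mem_singleton_iff.mpr hb)
    · have h1 : (r e).1 ∈ insert x I := hI1.2 _ x (Set.mem_insert x I) hlt.le hb
      rcases Set.mem_insert_iff.mp h1 with h | h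
      · exact absurd (h ▸ hlt) (lt_irrefl x)
      · exact Set.mem_union_left _ h
  refine ⟨?_, ?_, ?_⟩
  · intro e he
    refine ⟨hA e he, ?_⟩
    rw [Set.mem_setOf_eq] at he
    rw [he]
    exact hxmem
  · ext e
    simp only [Set.mem_inter_iff, Set.mem_empty_iff_false, iff_false, not_and,
      Set.mem_setOf_eq]
    intro hes he
    have h1 := hes.1
    rw [he] at h1
    exact hxmem h1
  · have hsub : (I ∪ {(⊥ : P)}) ⊆ insert x I ∪ {(⊥ : P)} := by
      apply Set.union_subset_union_left
      exact Set.subset_insert x I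
    ext e
    constructor
    · rintro ⟨h1, h2⟩
      have h2' : (r e).2 ∉ I ∪ {(⊥ : P)} := fun hm => h2 (hsub hm)
      by_cases hx1 : (r e).1 = x
      · exact Or.inr hx1
      · left
        have h1' : (r e).1 ∈ I ∪ {(⊥ : P)} := by
          simp only [Set.mem_union, Set.mem_insert_iff, Set.mem_singleton_iff] at h1 ⊢
          tauto
        refine ⟨⟨h1', h2'⟩, ?_⟩
        intro he2
        rw [Set.mem_setOf_eq] at he2
        apply h2
        rw [he2]
        exact Set.mem_union_left _ (Set.mem_insert x I)
    · rintro (⟨⟨h1, h2⟩, hne⟩ | he)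
      · refine ⟨hsub h1, ?_⟩
        intro hm
        simp only [Set.mem_union, Set.mem_insert_iff, Set.mem_singleton_iff] at hm
        rcases hm with (hm | hm) | hm
        · exact hne hm
        · exact h2 (Set.mem_union_left _ hm)
        · exact h2 (Set.mem_union_right _ (Set.mem_singleton_iff.mpr hm))
      · rw [Set.mem_setOf_eq] at he
        exact ⟨by rw [he]; exact Set.mem_union_left _ (Set.mem_insert x I), hB e he⟩

lemma theta_card [Fintype E] (r : E → P × P) (hr : ∀ e, (r e).1 < (r e).2)
    (q : ℕ) (hcard : ∀ I : Set P, IsIdealStar I → (supGen r I).ncard = q)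
    {x : P} (hxb : x ≠ ⊥) (hxt : x ≠ ⊤) :
    {e : E | (r e).2 = x}.ncard = {e : E | (r e).1 = x}.ncard := by
  set I₀ : Set P := {y | y < x ∧ y ≠ ⊥} with hI₀def
  have hI₀ : IsIdealStar I₀ := by
    constructor
    · intro y hy
      exact ⟨hy.2, ne_top_of_lt (lt_of_lt_of_le hy.1 le_top)⟩
    · intro u v hv hu hub
      exact ⟨lt_of_le_of_lt hu hv.1, hub⟩
  have hxI₀ : x ∉ I₀ := fun h => absurd h.1 (lt_irrefl x)
  have hI₁ : IsIdealStar (insert x I₀) := by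
    constructor
    · intro y hy
      rcases Set.mem_insert_iff.mp hy with heq | hy
      · rw [heq]
        exact ⟨hxb, hxt⟩
      · exact ⟨hy.2, ne_top_of_lt (lt_of_lt_of_le hy.1 le_top)⟩
    · intro u v hv hu hub
      rcases Set.mem_insert_iff.mp hv with heq | hv
      · rw [heq] at hu
        by_cases hux : u = x
        · rw [hux]
          exact Set.mem_insert x I₀
        · exact Set.mem_insert_of_mem x ⟨lt_of_le_of_ne hu hux, hub⟩
      · exact Set.mem_insert_of_mem x ⟨lt_of_le_of_lt hu hv.1, hub⟩
  obtain ⟨h1, h2, h3⟩ := step_sets r hr hI₀ hxI₀ hI₁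
  set A := {e : E | (r e).2 = x}
  set B := {e : E | (r e).1 = x}
  set s := supGen r I₀ with hsdef
  have hdisj : Disjoint (s \ A) B := by
    rw [Set.disjoint_left]
    intro e he heB
    have : e ∈ s ∩ B := ⟨he.1, heB⟩
    rw [h2] at this
    exact this
  have hq0 : s.ncard = q := hcard I₀ hI₀
  have hq1 : ((s \ A) ∪ B).ncard = q := by
    rw [← h3]
    exact hcard _ hI₁
  rw [Set.ncard_union_eq hdisj (Set.toFinite _) (Set.toFinite _),
    Set.ncard_diff h1 (Set.toFinite _), hq0] at hq1
  have hAle : A.ncard ≤ q := by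
    rw [← hq0]
    exact Set.ncard_le_ncard h1 (Set.toFinite _)
  omega

lemma step_setLE [Fintype E] (r : E → P × P) (hr : ∀ e, (r e).1 < (r e).2)
    (q : ℕ) (hcard : ∀ I : Set P, IsIdealStar I → (supGen r I).ncard = q)
    {I : Set P} (hI : IsIdealStar I) {x : P} (hx : x ∉ I)
    (hI1 : IsIdealStar (insert x I)) :
    setLE r (supGen r I) (supGen r (insert x I)) := by
  classical
  obtain ⟨h1, h2, h3⟩ := step_sets r hr hI hx hI1
  have hxb : x ≠ ⊥ := (hI1.1 x (Set.mem_insert x I)).1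
  have hxt : x ≠ ⊤ := (hI1.1 x (Set.mem_insert x I)).2
  obtain ⟨f, hf⟩ := exists_bijOn_of_ncard_eq (theta_card r hr q hcard hxb hxt)
  set A := {e : E | (r e).2 = x}
  set B := {e : E | (r e).1 = x}
  set s := supGen r I with hsdef
  refine ⟨fun e => if e ∈ A then f e else e, ?_, ?_⟩
  · rw [h3]
    have hbij : Set.BijOn (fun e => if e ∈ A then f e else e) ((s \ A) ∪ A) ((s \ A) ∪ B) := by
      apply Set.BijOn.union
      · refine (Set.bijOn_id (s \ A)).congr ?_
        intro e he
        simp only [id_eq, if_neg he.2]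
      · refine hf.congr ?_
        intro e he
        simp only [if_pos he]
      · intro u hu v hv huv
        by_cases ha : u ∈ A <;> by_cases hb : v ∈ A
        · simp only [if_pos ha, if_pos hb] at huv
          exact hf.2.1 ha hb huv
        · exfalso
          simp only [if_pos ha, if_neg hb] at huv
          have hvs : v ∈ s := by
            rcases hv with hv | hv
            · exact hv.1
            · exact absurd hv hb
          have : v ∈ s ∩ B := ⟨hvs, huv ▸ hf.1 ha⟩
          rw [h2] at this
          exact this
        · exfalso
          simp only [if_neg ha, if_pos hb] at huv
          have hus : u ∈ s := by
            rcases hu with hu | hu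
            · exact hu.1
            · exact absurd hu ha
          have : u ∈ s ∩ B := ⟨hus, huv ▸ hf.1 hb⟩
          rw [h2] at this
          exact this
        · simpa only [if_neg ha, if_neg hb] using huv
    rwa [Set.diff_union_of_subset h1] at hbij
  · intro e he
    by_cases ha : e ∈ A
    · simp only [if_pos ha]
      right
      have hfe : f e ∈ B := hf.1 ha
      have h2x : (r e).2 = x := ha
      have h1x : (r (f e)).1 = x := hfe
      rw [h2x, h1x]
    · simp only [if_neg ha]
      exact Or.inl rfl

lemma subset_setLE [Fintype P] [Fintype E] (r : E → P × P)
    (hr : ∀ e, (r e).1 < (r e).2)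
    (q : ℕ) (hcard : ∀ I : Set P, IsIdealStar I → (supGen r I).ncard = q) :
    ∀ (n : ℕ) (I I' : Set P), IsIdealStar I → IsIdealStar I' → I ⊆ I' →
      (I' \ I).ncard = n → setLE r (supGen r I) (supGen r I') := by
  intro n
  induction n with
  | zero =>
    intro I I' hI hI' hsub h0
    have hempty : I' \ I = ∅ := (Set.ncard_eq_zero (Set.toFinite _)).mp h0
    have heq : I = I' := hsub.antisymm (Set.diff_eq_empty.mp hempty)
    rw [heq]
    exact ⟨id, Set.bijOn_id _, fun e _ => Or.inl rfl⟩
  | succ n ih =>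
    intro I I' hI hI' hsub hn
    have hne : (I' \ I).Nonempty := by
      rw [Set.nonempty_iff_ne_empty]
      intro h
      rw [h, Set.ncard_empty] at hn
      omega
    obtain ⟨x, hx, hmin'⟩ := Set.Finite.exists_minimalFor id _ (Set.toFinite (I' \ I)) hne
    have hmin : ∀ a' ∈ I' \ I, id a' ≤ id x → id x = id a' := fun a' ha' h => le_antisymm (hmin' ha' h) h
    have hxI' : x ∈ I' := hx.1
    have hxI : x ∉ I := hx.2
    have hxb : x ≠ ⊥ := (hI'.1 x hxI').1
    have hI1 : IsIdealStar (insert x I) := by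
      constructor
      · intro y hy
        rcases Set.mem_insert_iff.mp hy with rfl | hy
        · exact hI'.1 y hxI'
        · exact hI.1 y hy
      · intro u v hv hu hub
        rcases Set.mem_insert_iff.mp hv with heq | hv
        · rw [heq] at hu
          by_cases hux : u = x
          · rw [hux]
            exact Set.mem_insert x I
          · have huI' : u ∈ I' := hI'.2 u x hxI' hu hub
            by_cases huI : u ∈ I
            · exact Set.mem_insert_of_mem _ huI
            · have hmu := hmin u ⟨huI', huI⟩ hu
              simp only [id_eq] at hmu
              exact absurd hmu.symm hux
        · exact Set.mem_insert_of_mem x (hI.2 u v hv hu hub)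
    have hstep : (I' \ insert x I).ncard = n := by
      have hdiff : I' \ insert x I = (I' \ I) \ {x} := by
        ext y
        simp only [Set.mem_diff, Set.mem_insert_iff, Set.mem_singleton_iff]
        tauto
      rw [hdiff, Set.ncard_diff_singleton_of_mem hx, hn]
      omega
    exact setLE_trans r hr (step_setLE r hr q hcard hI hxI hI1)
      (ih (insert x I) I' hI1 hI' (Set.insert_subset hxI' hsub) hstep)

lemma setLE_subset [Fintype P] [Fintype E] (r : E → P × P)
    (hr : ∀ e, (r e).1 < (r e).2)
    (q : ℕ) (hcard : ∀ I : Set P, IsIdealStar I → (supGen r I).ncard = q)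
    (hΘ : ∀ x : P, x ≠ ⊥ → x ≠ ⊤ →
      ({e : E | (r e).1 = x} ∪ {e : E | (r e).2 = x}).Nonempty)
    {I I' : Set P} (hI : IsIdealStar I) (hI' : IsIdealStar I')
    (h : setLE r (supGen r I) (supGen r I')) : I ⊆ I' := by
  by_contra hns
  have hne : (I \ I').Nonempty := by
    obtain ⟨a, ha, hna⟩ := Set.not_subset.mp hns
    exact ⟨a, ha, hna⟩
  obtain ⟨x, hx, hmax'⟩ := Set.Finite.exists_maximalFor id _ (Set.toFinite (I \ I')) hne
  have hmax : ∀ a' ∈ I \ I', id x ≤ id a' → id x = id a' := fun a' ha' h => le_antisymm h (hmax' ha' h)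
  have hxb : x ≠ ⊥ := (hI.1 x hx.1).1
  have hxt : x ≠ ⊤ := (hI.1 x hx.1).2
  have hBne : {e : E | (r e).1 = x}.Nonempty := by
    by_contra hB
    rw [Set.not_nonempty_iff_eq_empty] at hB
    have hA0 : {e : E | (r e).2 = x}.ncard = 0 := by
      rw [theta_card r hr q hcard hxb hxt, hB, Set.ncard_empty]
    have hA : {e : E | (r e).2 = x} = ∅ := (Set.ncard_eq_zero (Set.toFinite _)).mp hA0
    obtain ⟨e, he⟩ := hΘ x hxb hxt
    rcases he with he | he
    · rw [hB] at he
      exact he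
    · rw [hA] at he
      exact he
  obtain ⟨e, he⟩ := hBne
  rw [Set.mem_setOf_eq] at he
  have hlt : x < (r e).2 := he ▸ hr e
  have h2b : (r e).2 ≠ ⊥ := fun hb => absurd (hb ▸ hlt) not_lt_bot
  by_cases hem : (r e).2 ∈ I ∪ {(⊥ : P)}
  · have heI : (r e).2 ∈ I := by
      rcases hem with hm | hm
      · exact hm
      · exact absurd (Set.mem_singleton_iff.mp hm) h2b
    have heI' : (r e).2 ∈ I' := by
      by_contra hno
      have hm := hmax (r e).2 ⟨heI, hno⟩ hlt.le
      simp only [id_eq] at hm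
      exact absurd hm (ne_of_lt hlt)
    exact hx.2 (hI'.2 x (r e).2 heI' hlt.le hxb)
  · have heS : e ∈ supGen r I := by
      refine ⟨?_, hem⟩
      rw [he]
      exact Set.mem_union_left _ hx.1
    obtain ⟨π, hπ, hle⟩ := h
    have hπe : π e ∈ supGen r I' := hπ.1 heS
    rcases hle e heS with heq | hlt2
    · rw [← heq] at hπe
      rcases hπe.1 with hm | hm
      · rw [he] at hm
        exact hx.2 hm
      · rw [he] at hm
        exact hxb (Set.mem_singleton_iff.mp hm)
    · rcases hπe.1 with hm | hm
      · have h2I' : (r e).2 ∈ I' := hI'.2 _ _ hm hlt2 h2b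
        exact hx.2 (hI'.2 x (r e).2 h2I' hlt.le hxb)
      · rw [Set.mem_singleton_iff] at hm
        rw [hm] at hlt2
        exact h2b (le_antisymm hlt2 bot_le)

end Helpers

/-- Suppose `e⁺ ≺ e⁻` strictly for every `e ∈ E`, there is a positive
integer `q` with `|sup_r(I)| = q` for every ideal `I` of `P*`, and
`Θ⁺(x) ∪ Θ⁻(x) ≠ ∅` for every `x ∈ P*`. Then `sup_r` is a bijection from the ideals of
`P*` onto `𝒮`, and for any two ideals `I, I′`: `I ⊆ I′ ↔ sup_r(I) ≤ sup_r(I′)`. -/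
theorem stmt_7 {P E : Type*} [Fintype P] [PartialOrder P] [OrderBot P] [OrderTop P]
    [Fintype E] (hbt : (⊥ : P) ≠ ⊤)
    (r : E → P × P) (hr : ∀ e, (r e).1 < (r e).2)
    (q : ℕ) (hq : 0 < q)
    (hcard : ∀ I : Set P, IsIdealStar I → (supGen r I).ncard = q)
    (hΘ : ∀ x : P, x ≠ ⊥ → x ≠ ⊤ →
      ({e : E | (r e).1 = x} ∪ {e : E | (r e).2 = x}).Nonempty) :
    Set.BijOn (supGen r) {I : Set P | IsIdealStar I}
      {S : Set E | ∃ I : Set P, IsIdealStar I ∧ S = supGen r I} ∧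
    (∀ I I' : Set P, IsIdealStar I → IsIdealStar I' →
      (I ⊆ I' ↔ setLE r (supGen r I) (supGen r I'))) := by
  have key : ∀ I I' : Set P, IsIdealStar I → IsIdealStar I' →
      (I ⊆ I' ↔ setLE r (supGen r I) (supGen r I')) := by
    intro I I' hI hI'
    constructor
    · intro hsub
      exact subset_setLE r hr q hcard _ I I' hI hI' hsub rfl
    · intro h
      exact setLE_subset r hr q hcard hΘ hI hI' h
  refine ⟨⟨?_, ?_, ?_⟩, key⟩
  · intro I hI
    exact ⟨I, hI, rfl⟩
  · intro I hI I' hI' heq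
    have h1 : setLE r (supGen r I) (supGen r I') := by
      rw [← heq]
      exact ⟨id, Set.bijOn_id _, fun e _ => Or.inl rfl⟩
    have h2 : setLE r (supGen r I') (supGen r I) := by
      rw [heq]
      exact ⟨id, Set.bijOn_id _, fun e _ => Or.inl rfl⟩
    exact ((key I I' hI hI').mpr h1).antisymm ((key I' I hI' hI).mpr h2)
  · intro S hS
    obtain ⟨I, hI, rfl⟩ := hS
    exact ⟨I, hI, rfl⟩
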